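/- For d = 2k, the set of univariate real polynomials of degree at most 2k that are non-negative on ℝ₊ equals Σ_{2k} + t·Σ_{2k−2}, where Σ_{2m} denotes sums of squares of degree at most 2m. -/

import Mathlib

open Polynomial

/-- `σ` is a sum of squares of polynomials of degree at most `k`. -/
def IsSOS (k : ℕ) (σ : Polynomial ℝ) : Prop :=
  ∃ (l : ℕ) (g : Fin l → Polynomial ℝ), (∀ j, (g j).natDegree ≤ k) ∧ σ = ∑ j, g j ^ 2

section SOSAux

open Filter

section Aux

/-- limit argument: nonneg off a point implies nonneg at the point. -/
lemma eval_nonneg_of_nonneg_off (r : ℝ[X]) (x₀ : ℝ) (h : ∀ x, x ≠ x₀ → 0 ≤ r.eval x) :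
    0 ≤ r.eval x₀ := by
  have hc : Tendsto (fun x => r.eval x) (nhdsWithin x₀ {x₀}ᶜ) (nhds (r.eval x₀)) :=
    (r.continuous.continuousAt).continuousWithinAt
  refine ge_of_tendsto hc ?_
  filter_upwards [self_mem_nhdsWithin] with x hx
  exact h x hx

lemma eval_eq_zero_of_mul (s : ℝ[X]) (x₀ : ℝ) (h : ∀ x, 0 ≤ (x - x₀) * s.eval x) :
    s.eval x₀ = 0 := by
  have h1 : 0 ≤ s.eval x₀ := by
    have hc : Tendsto (fun x => s.eval x) (nhdsWithin x₀ (Set.Ioi x₀)) (nhds (s.eval x₀)) :=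
      (s.continuous.continuousAt).continuousWithinAt
    refine ge_of_tendsto hc ?_
    filter_upwards [self_mem_nhdsWithin] with x hx
    have hx' : x₀ < x := hx
    nlinarith [h x]
  have h2 : s.eval x₀ ≤ 0 := by
    have hc : Tendsto (fun x => s.eval x) (nhdsWithin x₀ (Set.Iio x₀)) (nhds (s.eval x₀)) :=
      (s.continuous.continuousAt).continuousWithinAt
    refine le_of_tendsto hc ?_
    filter_upwards [self_mem_nhdsWithin] with x hx
    have hx' : x < x₀ := hx
    nlinarith [h x]
  linarith

lemma exists_min_poly (p : ℝ[X]) (hd : 0 < p.degree) (hp : ∀ x, 0 ≤ p.eval x) :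
    ∃ x₀ : ℝ, ∀ x, p.eval x₀ ≤ p.eval x := by
  have hT : Tendsto (fun x => p.eval x) atTop atTop :=
    (p.abs_tendsto_atTop hd).congr fun x => abs_of_nonneg (hp x)
  have hB : Tendsto (fun x => p.eval x) atBot atTop := by
    set q : ℝ[X] := p.comp (-X) with hq
    have hqe : ∀ x : ℝ, q.eval x = p.eval (-x) := by
      intro x; rw [hq, eval_comp]; simp
    have hqd : 0 < q.degree := by
      have hnd : q.natDegree = p.natDegree := by
        rw [hq, natDegree_comp]; simp
      rw [← natDegree_pos_iff_degree_pos] at hd ⊢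
      omega
    have hqT : Tendsto (fun x => q.eval x) atTop atTop :=
      (q.abs_tendsto_atTop hqd).congr fun x => abs_of_nonneg (by rw [hqe]; exact hp _)
    have hcomp := hqT.comp tendsto_neg_atBot_atTop
    refine hcomp.congr fun x => ?_
    simp [Function.comp, hqe]
  have hco : Tendsto (fun x => p.eval x) (cocompact ℝ) atTop := by
    rw [cocompact_eq_atBot_atTop]
    exact tendsto_sup.mpr ⟨hB, hT⟩
  exact p.continuous.exists_forall_le' 0 (hco.eventually (eventually_ge_atTop (p.eval 0)))

lemma nonneg_sos : ∀ (n : ℕ) (p : ℝ[X]), p.natDegree ≤ n → (∀ x, 0 ≤ p.eval x) →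
    ∃ (l : ℕ) (g : Fin l → ℝ[X]), p = ∑ j, g j ^ 2 := by
  intro n
  induction n using Nat.strong_induction_on with
  | _ n ih =>
    intro p hdeg hp
    by_cases h0 : p.natDegree = 0
    · obtain ⟨c, rfl⟩ : ∃ c, p = C c := ⟨p.coeff 0, eq_C_of_natDegree_eq_zero h0⟩
      have hc : 0 ≤ c := by simpa using hp 0
      refine ⟨1, ![C (Real.sqrt c)], ?_⟩
      simp [← C_pow, Real.sq_sqrt hc]
    · have hd1 : 0 < p.degree := natDegree_pos_iff_degree_pos.mp (Nat.pos_of_ne_zero h0)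
      obtain ⟨x₀, hx₀⟩ := exists_min_poly p hd1 hp
      set c := p.eval x₀ with hc
      have hc0 : 0 ≤ c := hp x₀
      set q := p - C c with hqdef
      have hq0 : ∀ x, 0 ≤ q.eval x := fun x => by
        simp only [hqdef, eval_sub, eval_C]; linarith [hx₀ x]
      have hqroot : q.IsRoot x₀ := by simp [hqdef, hc]
      have hqdeg : q.natDegree = p.natDegree := natDegree_sub_C
      have hqne : q ≠ 0 := fun h => h0 (by rw [← hqdeg, h, natDegree_zero])
      obtain ⟨s, hs⟩ := dvd_iff_isRoot.mpr hqroot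
      have hs0 : s.eval x₀ = 0 := by
        refine eval_eq_zero_of_mul s x₀ fun x => ?_
        have := hq0 x
        rw [hs] at this
        simpa using this
      obtain ⟨r, hr⟩ := dvd_iff_isRoot.mpr hs0
      have hqr : q = (X - C x₀) ^ 2 * r := by rw [hs, hr]; ring
      have hrne : r ≠ 0 := by
        rintro rfl
        rw [mul_zero] at hqr
        exact hqne hqr
      have hr0 : ∀ x, 0 ≤ r.eval x := by
        intro x
        rcases eq_or_ne x x₀ with rfl | hx
        · refine eval_nonneg_of_nonneg_off r x fun y hy => ?_
          have := hq0 y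
          rw [hqr] at this
          simp only [eval_mul, eval_pow, eval_sub, eval_X, eval_C] at this
          have hy2 : 0 < (y - x) ^ 2 := by
            have : y - x ≠ 0 := sub_ne_zero.mpr hy
            positivity
          nlinarith
        · have := hq0 x
          rw [hqr] at this
          simp only [eval_mul, eval_pow, eval_sub, eval_X, eval_C] at this
          have hx2 : 0 < (x - x₀) ^ 2 := by
            have : x - x₀ ≠ 0 := sub_ne_zero.mpr hx
            positivity
          nlinarith
      have hrdeg : r.natDegree + 2 = q.natDegree := by
        rw [hqr, natDegree_mul (by exact pow_ne_zero _ (X_sub_C_ne_zero x₀)) hrne,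
          natDegree_pow, natDegree_X_sub_C]
        ring
      have h1le : 1 ≤ p.natDegree := Nat.pos_of_ne_zero h0
      have hlt : r.natDegree < n := by omega
      obtain ⟨l, g, hg⟩ := ih r.natDegree hlt r le_rfl hr0
      refine ⟨l + 1, Fin.cons (C (Real.sqrt c)) (fun j => (X - C x₀) * g j), ?_⟩
      simp only [Fin.sum_univ_succ, Fin.cons_zero, Fin.cons_succ]
      have hsq : (C (Real.sqrt c) : ℝ[X]) ^ 2 = C c := by
        rw [← C_pow, Real.sq_sqrt hc0]
      have hps : p = (X - C x₀) ^ 2 * (∑ j, g j ^ 2) + C c := by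
        rw [← hg, ← hqr, hqdef]; ring
      rw [hps, hsq, Finset.mul_sum]
      simp_rw [mul_pow]
      ring
end Aux

section Aux2

lemma coeff_sq_top (g : ℝ[X]) (m : ℕ) (h : g.natDegree ≤ m) :
    (g ^ 2).coeff (2 * m) = (g.coeff m) ^ 2 := by
  rw [sq, coeff_mul, Finset.sum_eq_single (m, m)]
  · rw [sq]
  · rintro ⟨i, j⟩ hij hne
    rw [Finset.HasAntidiagonal.mem_antidiagonal] at hij
    have hor : m < i ∨ m < j := by
      by_contra hcon
      push_neg at hcon
      apply hne
      have hi : i = m := by omega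
      have hj : j = m := by omega
      simp [hi, hj]
    rcases hor with h1 | h1
    · rw [coeff_eq_zero_of_natDegree_lt (lt_of_le_of_lt h h1), zero_mul]
    · rw [coeff_eq_zero_of_natDegree_lt (lt_of_le_of_lt h h1), mul_zero]
  · intro hnot
    exact absurd (Finset.HasAntidiagonal.mem_antidiagonal.mpr (by omega)) hnot

lemma sos_deg {l : ℕ} (g : Fin l → ℝ[X]) (j : Fin l) :
    2 * (g j).natDegree ≤ (∑ i, g i ^ 2).natDegree := by
  classical
  by_cases hj : g j = 0
  · simp [hj]
  · set s := Finset.univ.filter (fun i => g i ≠ 0) with hsdef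
    have hjs : j ∈ s := show j ∈ s from Finset.mem_filter.mpr ⟨Finset.mem_univ _, hj⟩
    set m := s.sup (fun i => (g i).natDegree) with hm
    have hle : ∀ i, (g i).natDegree ≤ m := by
      intro i
      by_cases h : g i = 0
      · simp [h, hm]
      · exact Finset.le_sup (f := fun i => (g i).natDegree) (show i ∈ s from Finset.mem_filter.mpr ⟨Finset.mem_univ _, h⟩)
    obtain ⟨j₁, hj₁s, hj₁⟩ := Finset.exists_mem_eq_sup s ⟨j, hjs⟩ (fun i => (g i).natDegree)
    have hj₁ne : g j₁ ≠ 0 := by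
      have := hj₁s
      rw [hsdef, Finset.mem_filter] at this
      exact this.2
    have hcoeff : (∑ i, g i ^ 2).coeff (2 * m) = ∑ i, ((g i).coeff m) ^ 2 := by
      rw [finset_sum_coeff]
      exact Finset.sum_congr rfl fun i _ => coeff_sq_top _ _ (hle i)
    have hne : (∑ i, g i ^ 2).coeff (2 * m) ≠ 0 := by
      rw [hcoeff]
      have h1 : 0 < ((g j₁).coeff m) ^ 2 := by
        have hcne : (g j₁).coeff m ≠ 0 := by
          rw [hm, hj₁]
          exact leadingCoeff_ne_zero.mpr hj₁ne
        positivity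
      have hpos : 0 < ∑ i, ((g i).coeff m) ^ 2 :=
        Finset.sum_pos' (fun i _ => sq_nonneg _) ⟨j₁, Finset.mem_univ _, h1⟩
      linarith
    have := le_natDegree_of_ne_zero hne
    have := hle j
    omega

noncomputable def evenP (g : ℝ[X]) : ℝ[X] :=
  ∑ i ∈ Finset.range (g.natDegree + 1), monomial i (g.coeff (2 * i))

noncomputable def oddP (g : ℝ[X]) : ℝ[X] :=
  ∑ i ∈ Finset.range (g.natDegree + 1), monomial i (g.coeff (2 * i + 1))

lemma coeff_evenP (g : ℝ[X]) (n : ℕ) : (evenP g).coeff n = g.coeff (2 * n) := by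
  rw [evenP, finset_sum_coeff]
  simp only [coeff_monomial]
  rw [Finset.sum_ite_eq' (Finset.range (g.natDegree + 1)) n]
  split_ifs with h
  · rfl
  · rw [Finset.mem_range, not_lt] at h
    exact (coeff_eq_zero_of_natDegree_lt (by omega)).symm

lemma coeff_oddP (g : ℝ[X]) (n : ℕ) : (oddP g).coeff n = g.coeff (2 * n + 1) := by
  rw [oddP, finset_sum_coeff]
  simp only [coeff_monomial]
  rw [Finset.sum_ite_eq' (Finset.range (g.natDegree + 1)) n]
  split_ifs with h
  · rfl
  · rw [Finset.mem_range, not_lt] at h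
    exact (coeff_eq_zero_of_natDegree_lt (by omega)).symm

lemma natDegree_evenP_le (g : ℝ[X]) (k : ℕ) (h : g.natDegree ≤ 2 * k) :
    (evenP g).natDegree ≤ k := by
  rw [natDegree_le_iff_coeff_eq_zero]
  intro m hm
  rw [coeff_evenP]
  exact coeff_eq_zero_of_natDegree_lt (by omega)

lemma natDegree_oddP_le (g : ℝ[X]) (k : ℕ) (h : g.natDegree ≤ 2 * k) :
    (oddP g).natDegree ≤ k - 1 := by
  rw [natDegree_le_iff_coeff_eq_zero]
  intro m hm
  rw [coeff_oddP]
  exact coeff_eq_zero_of_natDegree_lt (by omega)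

lemma even_odd_decomp (g : ℝ[X]) :
    g = expand ℝ 2 (evenP g) + X * expand ℝ 2 (oddP g) := by
  ext n
  rw [coeff_add]
  rcases Nat.even_or_odd n with ⟨m, hm⟩ | ⟨m, hm⟩
  · have h1 : (expand ℝ 2 (evenP g)).coeff n = g.coeff n := by
      rw [coeff_expand two_pos, if_pos ⟨m, by omega⟩, coeff_evenP]
      congr 1
      omega
    have h2 : (X * expand ℝ 2 (oddP g)).coeff n = 0 := by
      rcases Nat.eq_zero_or_pos n with h | h
      · subst h
        rw [mul_coeff_zero, coeff_X_zero, zero_mul]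
      · obtain ⟨n', rfl⟩ : ∃ n', n = n' + 1 := ⟨n - 1, by omega⟩
        rw [coeff_X_mul, coeff_expand two_pos, if_neg]
        rintro ⟨t, ht⟩
        omega
    rw [h1, h2, add_zero]
  · have h1 : (expand ℝ 2 (evenP g)).coeff n = 0 := by
      rw [coeff_expand two_pos, if_neg]
      rintro ⟨t, ht⟩
      omega
    have h2 : (X * expand ℝ 2 (oddP g)).coeff n = g.coeff n := by
      subst hm
      rw [coeff_X_mul, coeff_expand two_pos, if_pos ⟨m, by omega⟩, coeff_oddP]
      congr 1
      omega
    rw [h1, h2, zero_add]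

end Aux2

end SOSAux

/-- The polynomials of degree at most `2k` that are non-negative on `ℝ₊` are exactly
`Σ_{2k} + t Σ_{2k-2}`. -/
theorem stmt_14 (k : ℕ) (hk : 1 ≤ k) :
    {f : ℝ[X] | f.natDegree ≤ 2 * k ∧ ∀ x : ℝ, 0 ≤ x → 0 ≤ f.eval x} =
      {f : ℝ[X] | ∃ σ τ : ℝ[X], IsSOS k σ ∧ IsSOS (k - 1) τ ∧ f = σ + X * τ} := by
  ext f
  simp only [Set.mem_setOf_eq]
  constructor
  · rintro ⟨hdeg, hpos⟩
    set p := expand ℝ 2 f with hpdef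
    have hpnn : ∀ x, 0 ≤ p.eval x := fun x => by
      rw [hpdef, expand_eval]
      exact hpos _ (sq_nonneg x)
    obtain ⟨l, g, hg⟩ := nonneg_sos p.natDegree p le_rfl hpnn
    have hgdeg : ∀ j, (g j).natDegree ≤ 2 * k := by
      intro j
      have h1 := sos_deg g j
      rw [← hg] at h1
      have h2 : p.natDegree ≤ 4 * k := by
        rw [hpdef, natDegree_expand]
        omega
      omega
    set E := fun j => evenP (g j) with hE
    set O := fun j => oddP (g j) with hO
    set A := ∑ j, E j ^ 2 with hA
    set B := ∑ j, O j ^ 2 with hB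
    set Cc := ∑ j, E j * O j with hCc
    have key : ∀ x : ℝ, f.eval (x ^ 2) =
        A.eval (x ^ 2) + x ^ 2 * B.eval (x ^ 2) + 2 * x * Cc.eval (x ^ 2) := by
      intro x
      have h1 : f.eval (x ^ 2) = p.eval x := by rw [hpdef, expand_eval]
      rw [h1, hg, eval_finset_sum]
      have hterm : ∀ j ∈ Finset.univ, (g j ^ 2).eval x =
          ((E j).eval (x ^ 2)) ^ 2 + 2 * x * ((E j).eval (x ^ 2) * (O j).eval (x ^ 2))
            + x ^ 2 * ((O j).eval (x ^ 2)) ^ 2 := by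
        intro j _
        rw [even_odd_decomp (g j)]
        simp only [eval_pow, eval_add, eval_mul, eval_X, expand_eval, ← hE, ← hO]
        ring
      rw [Finset.sum_congr rfl hterm]
      rw [hA, hB, hCc]
      simp only [eval_finset_sum, eval_pow, eval_mul, Finset.sum_add_distrib, Finset.mul_sum]
      ring
    have hCc0 : Cc = 0 := by
      have hroot : ∀ y : ℝ, 0 < y → Cc.IsRoot y := by
        intro y hy
        set x := Real.sqrt y with hx
        have hx2 : x ^ 2 = y := Real.sq_sqrt hy.le
        have hx0 : 0 < x := Real.sqrt_pos.mpr hy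
        have e1 := key x
        have e2 := key (-x)
        rw [neg_pow, show ((-1 : ℝ) ^ 2) = 1 by norm_num, one_mul] at e2
        have h4 : 4 * x * Cc.eval (x ^ 2) = 0 := by linarith
        have : Cc.eval (x ^ 2) = 0 := by
          have h4x : (4 : ℝ) * x ≠ 0 := by positivity
          exact (mul_eq_zero.mp h4).resolve_left h4x
        rwa [hx2] at this
      apply eq_zero_of_infinite_isRoot
      apply Set.Infinite.mono (s := Set.Ioi (0 : ℝ)) (fun y hy => hroot y hy)
      exact Set.Ioi_infinite 0
    have hfAB : f = A + X * B := by
      have hzero : f - (A + X * B) = 0 := by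
        apply eq_zero_of_infinite_isRoot
        apply Set.Infinite.mono (s := Set.Ioi (0 : ℝ)) (fun y hy => ?_)
        · exact Set.Ioi_infinite 0
        · have hkey := key (Real.sqrt y)
          rw [Real.sq_sqrt (le_of_lt hy), hCc0] at hkey
          simp only [eval_zero, mul_zero, add_zero] at hkey
          simp only [Set.mem_setOf_eq, IsRoot, eval_sub, eval_add, eval_mul, eval_X]
          linarith
      have := sub_eq_zero.mp hzero
      exact this
    refine ⟨A, B, ⟨l, E, fun j => ?_, rfl⟩, ⟨l, O, fun j => ?_, rfl⟩, hfAB⟩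
    · exact natDegree_evenP_le _ _ (hgdeg j)
    · exact natDegree_oddP_le _ _ (hgdeg j)
  · rintro ⟨σ, τ, ⟨l1, g1, hg1d, rfl⟩, ⟨l2, g2, hg2d, rfl⟩, rfl⟩
    constructor
    · apply le_trans (natDegree_add_le _ _)
      apply max_le
      · apply natDegree_sum_le_of_forall_le
        intro j _
        calc (g1 j ^ 2).natDegree ≤ 2 * (g1 j).natDegree := by
              rw [natDegree_pow]
          _ ≤ 2 * k := by have := hg1d j; omega
      · apply le_trans (natDegree_mul_le)
        have hs : (∑ j, g2 j ^ 2).natDegree ≤ 2 * (k - 1) := by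
          apply natDegree_sum_le_of_forall_le
          intro j _
          rw [natDegree_pow]
          have := hg2d j
          omega
        have hX : (X : ℝ[X]).natDegree = 1 := natDegree_X
        omega
    · intro x hx
      simp only [eval_add, eval_mul, eval_X, eval_finset_sum, eval_pow]
      have h1 : 0 ≤ ∑ j, (g1 j).eval x ^ 2 :=
        Finset.sum_nonneg fun j _ => sq_nonneg _
      have h2 : 0 ≤ ∑ j, (g2 j).eval x ^ 2 :=
        Finset.sum_nonneg fun j _ => sq_nonneg _
      exact add_nonneg h1 (mul_nonneg hx h2)
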